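/- Let p ≥ 2 and define g_p : ℝ^d → ℝ^d by g_p(0) = 0 and g_p(z) = p^{−1/(p−1)} ‖z‖^{−(p−2)/(p−1)} z for z ≠ 0. Then g_p is (1/(p−1))-Hölder continuous with constant 3 p^{−1/(p−1)}: for all x, y ∈ ℝ^d, ‖g_p(y) − g_p(x)‖ ≤ (3/p^{1/(p−1)}) ‖y − x‖^{1/(p−1)}. -/

import Mathlib

open scoped Classical

/-- The inverse of the gradient of `z ↦ ‖z‖^p`. -/
noncomputable def gp {d : ℕ} (p : ℝ) (z : EuclideanSpace ℝ (Fin d)) :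
    EuclideanSpace ℝ (Fin d) :=
  if z = 0 then 0 else (p ^ (-(1 / (p - 1))) * ‖z‖ ^ (-((p - 2) / (p - 1)))) • z

open Real

lemma gp_exp_eq {p : ℝ} (hp : 2 ≤ p) : -((p - 2) / (p - 1)) = 1 / (p - 1) - 1 := by
  have h : p - 1 ≠ 0 := by linarith
  field_simp
  ring

lemma gp_norm {d : ℕ} {p : ℝ} (hp : 2 ≤ p) (z : EuclideanSpace ℝ (Fin d)) :
    ‖gp p z‖ = p ^ (-(1 / (p - 1))) * ‖z‖ ^ (1 / (p - 1)) := by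
  have hp1 : (0:ℝ) < p - 1 := by linarith
  have hα : (0:ℝ) < 1 / (p - 1) := by positivity
  by_cases hz : z = 0
  · rw [gp, if_pos hz, hz, norm_zero, Real.zero_rpow (ne_of_gt hα), mul_zero]
  · have hz' : 0 < ‖z‖ := norm_pos_iff.mpr hz
    have hc : 0 < p ^ (-(1 / (p - 1))) := Real.rpow_pos_of_pos (by linarith) _
    rw [gp, if_neg hz, norm_smul, Real.norm_eq_abs,
      abs_of_pos (mul_pos hc (Real.rpow_pos_of_pos hz' _)), gp_exp_eq hp, mul_assoc]
    congr 1
    rw [Real.rpow_sub_one hz'.ne', div_mul_cancel₀ _ hz'.ne']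

lemma gp_key {d : ℕ} {p : ℝ} (hp : 2 ≤ p) (x y : EuclideanSpace ℝ (Fin d))
    (hab : ‖x‖ ≤ ‖y‖) :
    ‖gp p y - gp p x‖ ≤ 3 / p ^ (1 / (p - 1)) * ‖y - x‖ ^ (1 / (p - 1)) := by
  have hp1 : (0:ℝ) < p - 1 := by linarith
  have hp0 : (0:ℝ) < p := by linarith
  set α : ℝ := 1 / (p - 1) with hαdef
  have hα : (0:ℝ) < α := by positivity
  have hα1 : α ≤ 1 := by
    rw [hαdef, div_le_one hp1]; linarith
  set c : ℝ := p ^ (-α) with hcdef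
  have hc : 0 < c := Real.rpow_pos_of_pos hp0 _
  have hrhs : 3 / p ^ α = 3 * c := by
    rw [hcdef, Real.rpow_neg hp0.le]; ring
  set a : ℝ := ‖x‖ with hadef
  set b : ℝ := ‖y‖ with hbdef
  set t : ℝ := ‖y - x‖ with htdef
  have ha0 : 0 ≤ a := norm_nonneg _
  have hb0 : 0 ≤ b := norm_nonneg _
  have ht0 : 0 ≤ t := norm_nonneg _
  rw [hrhs]
  rcases le_or_gt b t with hbt | htb
  · -- easy case: ‖y‖ ≤ ‖y - x‖
    have h1 : b ^ α ≤ t ^ α := Real.rpow_le_rpow hb0 hbt hα.le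
    have h2 : a ^ α ≤ t ^ α := Real.rpow_le_rpow ha0 (hab.trans hbt) hα.le
    have htα : 0 ≤ t ^ α := Real.rpow_nonneg ht0 _
    calc ‖gp p y - gp p x‖ ≤ ‖gp p y‖ + ‖gp p x‖ := norm_sub_le _ _
      _ = c * b ^ α + c * a ^ α := by rw [gp_norm hp, gp_norm hp]
      _ ≤ 3 * c * t ^ α := by nlinarith
  · -- hard case: t < b
    have hbpos : 0 < b := lt_of_le_of_lt ht0 htb
    have hy : y ≠ 0 := by
      intro h; rw [hbdef, h, norm_zero] at hbpos; exact lt_irrefl _ hbpos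
    rcases eq_or_lt_of_le ht0 with ht | htpos
    · have hxy : y = x := by
        have : y - x = 0 := by rwa [htdef, eq_comm, norm_eq_zero] at ht
        linear_combination (norm := module) this
      rw [hxy, sub_self, norm_zero, ← ht]
      rw [Real.zero_rpow (ne_of_gt hα)]
      positivity
    · have hapos : 0 < a := by
        have : b ≤ t + a := by
          calc b = ‖(y - x) + x‖ := by rw [sub_add_cancel]
            _ ≤ t + a := norm_add_le _ _
        linarith
      have hx : x ≠ 0 := by
        intro h; rw [hadef, h, norm_zero] at hapos; exact lt_irrefl _ hapos
      have hexp := gp_exp_eq hp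
      have hdecomp : gp p y - gp p x
          = (c * b ^ (α - 1)) • (y - x) + ((c * b ^ (α - 1)) - (c * a ^ (α - 1))) • x := by
        rw [gp, gp, if_neg hx, if_neg hy, hexp]
        module
      have hba : a ^ (α - 1) ≥ b ^ (α - 1) :=
        Real.rpow_le_rpow_of_nonpos hapos hab (by linarith)
      have haα : a ^ α ≤ b ^ α := Real.rpow_le_rpow ha0 hab hα.le
      have hbt' : b ^ (α - 1) ≤ t ^ (α - 1) :=
        Real.rpow_le_rpow_of_nonpos htpos htb.le (by linarith)
      have hbapos : 0 < b ^ (α - 1) := Real.rpow_pos_of_pos hbpos _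
      have hsub : b - a ≤ t := by
        rw [hbdef, hadef, htdef]; exact norm_sub_norm_le _ _
      have haa : a ^ (α - 1) * a = a ^ α := by
        rw [Real.rpow_sub_one hapos.ne', div_mul_cancel₀ _ hapos.ne']
      have htt : t ^ (α - 1) * t = t ^ α := by
        rw [Real.rpow_sub_one htpos.ne', div_mul_cancel₀ _ htpos.ne']
      have step1 : ‖gp p y - gp p x‖ ≤ c * b ^ (α - 1) * t + (c * a ^ (α - 1) - c * b ^ (α - 1)) * a := by
        rw [hdecomp]
        calc ‖(c * b ^ (α - 1)) • (y - x) + ((c * b ^ (α - 1)) - (c * a ^ (α - 1))) • x‖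
            ≤ ‖(c * b ^ (α - 1)) • (y - x)‖ + ‖((c * b ^ (α - 1)) - (c * a ^ (α - 1))) • x‖ :=
              norm_add_le _ _
          _ = |c * b ^ (α - 1)| * t + |c * b ^ (α - 1) - c * a ^ (α - 1)| * a := by
              rw [norm_smul, norm_smul, Real.norm_eq_abs, Real.norm_eq_abs]
          _ = c * b ^ (α - 1) * t + (c * a ^ (α - 1) - c * b ^ (α - 1)) * a := by
              rw [abs_of_pos (mul_pos hc hbapos), abs_of_nonpos (by nlinarith), neg_sub]
      have step2 : (c * a ^ (α - 1) - c * b ^ (α - 1)) * a ≤ c * b ^ (α - 1) * t := by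
        have h1 : (c * a ^ (α - 1) - c * b ^ (α - 1)) * a = c * (a ^ α - b ^ (α - 1) * a) := by
          rw [← haa]; ring
        rw [h1]
        have h2 : a ^ α - b ^ (α - 1) * a ≤ b ^ α - b ^ (α - 1) * a := by linarith
        have h3 : b ^ α - b ^ (α - 1) * a = b ^ (α - 1) * (b - a) := by
          rw [Real.rpow_sub_one hbpos.ne']; field_simp
        have h4 : b ^ (α - 1) * (b - a) ≤ b ^ (α - 1) * t := mul_le_mul_of_nonneg_left hsub hbapos.le
        have h5 : a ^ α - b ^ (α - 1) * a ≤ b ^ (α - 1) * t := by linarith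
        calc c * (a ^ α - b ^ (α - 1) * a) ≤ c * (b ^ (α - 1) * t) :=
              mul_le_mul_of_nonneg_left h5 hc.le
          _ = c * b ^ (α - 1) * t := (mul_assoc _ _ _).symm
      have step3 : c * b ^ (α - 1) * t ≤ c * t ^ α := by
        rw [← htt]
        have h6 : b ^ (α - 1) * t ≤ t ^ (α - 1) * t := mul_le_mul_of_nonneg_right hbt' htpos.le
        calc c * b ^ (α - 1) * t = c * (b ^ (α - 1) * t) := mul_assoc _ _ _
          _ ≤ c * (t ^ (α - 1) * t) := mul_le_mul_of_nonneg_left h6 hc.le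
      have htα : 0 ≤ t ^ α := Real.rpow_nonneg ht0 _
      have h0 : 0 ≤ c * t ^ α := mul_nonneg hc.le htα
      linarith

/-- `g_p` is `(1/(p-1))`-Hölder continuous with constant `3 p^(-1/(p-1))`. -/
theorem gp_holder (d : ℕ) (p : ℝ) (hp : 2 ≤ p) (x y : EuclideanSpace ℝ (Fin d)) :
    ‖gp p y - gp p x‖ ≤ 3 / p ^ (1 / (p - 1)) * ‖y - x‖ ^ (1 / (p - 1)) := by
  rcases le_total ‖x‖ ‖y‖ with h | h
  · exact gp_key hp x y h
  · rw [norm_sub_rev, norm_sub_rev y x]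
    exact gp_key hp y x h
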